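/- Let E : [1,∞) → [0,∞) be nondecreasing with E(R) ≤ C R^α for all R ≥ 1 (some α, C > 0), and suppose for every η > 0 there is R₀ with E(R) ≤ η·E(2R) for all R ≥ R₀. If moreover for each large R, E(R) ≤ C^ℓ κ^{N(ℓ)} E(2^ℓ R) with κ ∈ (0,1) and N(ℓ)/ℓ → ∞, then E(R) = 0 for all sufficiently large R, hence for all R. -/

import Mathlib

open Real Filter

/-- If the (nondecreasing, nonnegative) energy function has polynomial growth,
decays dyadically with arbitrarily small factor, and satisfies the iterated
estimate `E R ≤ C^ℓ κ^{N(ℓ)} E(2^ℓ R)` with `N(ℓ)/ℓ → ∞`, then it vanishes. -/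
theorem stmt_8 (E : ℝ → ℝ)
    (hnonneg : ∀ R, 0 < R → 0 ≤ E R)
    (hmono : ∀ s t, 0 < s → s ≤ t → E s ≤ E t)
    (C α : ℝ) (hC : 0 < C)
    (hgrowth : ∀ R, 1 ≤ R → E R ≤ C * R ^ α)
    (hη : ∀ η : ℝ, 0 < η → ∃ R₀ : ℝ, ∀ R, R₀ ≤ R → E R ≤ η * E (2 * R))
    (κ : ℝ) (hκ : κ ∈ Set.Ioo (0:ℝ) 1) (N : ℕ → ℝ)
    (hNdiv : Tendsto (fun ℓ : ℕ => N ℓ / (ℓ : ℝ)) atTop atTop)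
    (hiter : ∃ R₁ : ℝ, 1 ≤ R₁ ∧ ∀ R, R₁ ≤ R → ∀ ℓ : ℕ,
      E R ≤ C ^ ℓ * κ ^ (N ℓ) * E (2 ^ ℓ * R)) :
    ∀ R, 0 < R → E R = 0 := by
  obtain ⟨R₁, hR₁, hit⟩ := hiter
  obtain ⟨hκ0, hκ1⟩ := hκ
  have hlogκ : Real.log κ < 0 := Real.log_neg hκ0 hκ1
  -- first prove E R = 0 for R ≥ R₁
  have key : ∀ R, R₁ ≤ R → E R = 0 := by
    intro R hR
    have hR1 : (1:ℝ) ≤ R := le_trans hR₁ hR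
    have hRpos : (0:ℝ) < R := lt_of_lt_of_le one_pos hR1
    -- g ℓ : log of the bound
    set g : ℕ → ℝ := fun ℓ => (ℓ : ℝ) * Real.log C + N ℓ * Real.log κ
      + (Real.log C + α * ((ℓ : ℝ) * Real.log 2 + Real.log R)) with hg
    have hbound : ∀ ℓ : ℕ, E R ≤ Real.exp (g ℓ) := by
      intro ℓ
      have h2ℓ : (1:ℝ) ≤ 2 ^ ℓ := one_le_pow₀ (by norm_num)
      have h2ℓR : (1:ℝ) ≤ 2 ^ ℓ * R := by nlinarith
      have h1 := hit R hR ℓ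
      have h2 : E (2 ^ ℓ * R) ≤ C * (2 ^ ℓ * R) ^ α := hgrowth _ h2ℓR
      have hCpow : (0:ℝ) ≤ C ^ ℓ * κ ^ (N ℓ) := by positivity
      have h3 : E R ≤ C ^ ℓ * κ ^ (N ℓ) * (C * (2 ^ ℓ * R) ^ α) :=
        h1.trans (mul_le_mul_of_nonneg_left h2 hCpow)
      have e1 : (C : ℝ) ^ ℓ = Real.exp ((ℓ : ℝ) * Real.log C) := by
        rw [← Real.rpow_natCast C ℓ, Real.rpow_def_of_pos hC, mul_comm]
      have e2 : κ ^ (N ℓ) = Real.exp (N ℓ * Real.log κ) := by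
        rw [Real.rpow_def_of_pos hκ0, mul_comm]
      have e3 : C * (2 ^ ℓ * R) ^ α
          = Real.exp (Real.log C + α * ((ℓ : ℝ) * Real.log 2 + Real.log R)) := by
        rw [Real.exp_add, Real.exp_log hC]
        congr 1
        rw [Real.rpow_def_of_pos (by positivity), mul_comm α]
        congr 1
        rw [Real.log_mul (by positivity) (ne_of_gt hRpos), Real.log_pow]
      calc E R ≤ C ^ ℓ * κ ^ (N ℓ) * (C * (2 ^ ℓ * R) ^ α) := h3
        _ = Real.exp (g ℓ) := by
            rw [e1, e2, e3, ← Real.exp_add, ← Real.exp_add]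
    -- g tends to -∞
    have hgtend : Tendsto g atTop atBot := by
      have hmain : Tendsto (fun ℓ : ℕ =>
          Real.log C + (N ℓ / (ℓ : ℝ)) * Real.log κ + α * Real.log 2) atTop atBot := by
        apply tendsto_atBot_add_const_right
        apply tendsto_atBot_add_const_left
        exact Tendsto.atTop_mul_const_of_neg hlogκ hNdiv
      have hprod : Tendsto (fun ℓ : ℕ => (ℓ : ℝ) *
          (Real.log C + (N ℓ / (ℓ : ℝ)) * Real.log κ + α * Real.log 2)) atTop atBot :=
        Tendsto.atTop_mul_atBot₀ tendsto_natCast_atTop_atTop hmain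
      have heq : ∀ᶠ ℓ : ℕ in atTop, (ℓ : ℝ) *
          (Real.log C + (N ℓ / (ℓ : ℝ)) * Real.log κ + α * Real.log 2)
          + (Real.log C + α * Real.log R) = g ℓ := by
        filter_upwards [eventually_ge_atTop 1] with ℓ hℓ
        have hℓ0 : (ℓ : ℝ) ≠ 0 := Nat.cast_ne_zero.mpr (by omega)
        field_simp [hg]
        ring
      exact (tendsto_atBot_add_const_right _ _ hprod).congr' heq
    have hexp : Tendsto (fun ℓ => Real.exp (g ℓ)) atTop (nhds 0) :=
      Real.tendsto_exp_atBot.comp hgtend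
    have hle0 : E R ≤ 0 := ge_of_tendsto' hexp hbound
    exact le_antisymm hle0 (hnonneg R hRpos)
  intro R hRpos
  have h1 : E R ≤ E (max R R₁) := hmono _ _ hRpos (le_max_left _ _)
  rw [key _ (le_max_right _ _)] at h1
  exact le_antisymm h1 (hnonneg R hRpos)
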